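/- For every finitely generated A-module M and every integer i ≥ 1, the A-module Ext^i_A(M, A) is a torsion module, i.e. every element of Ext^i_A(M, A) is annihilated by some nonzero element of A. -/

import Mathlib

open CategoryTheory

universe u v


section Yoneda
variable {C : Type u} [Category.{v} C] [Abelian C] (A : Type) [CommRing A] [Linear A C] (Y : C)

/-- Contravariant functoriality of `ChainComplex.linearYonedaObj`. -/
noncomputable def yonedaMap {X₁ X₂ : ChainComplex C ℕ} (f : X₁ ⟶ X₂) :
    X₂.linearYonedaObj A Y ⟶ X₁.linearYonedaObj A Y where
  f i := ModuleCat.ofHom (Linear.leftComp A Y (f.f i))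
  comm' i j _ := by
    ext (φ : X₂.X i ⟶ Y)
    change X₁.d j i ≫ (f.f i ≫ φ) = f.f j ≫ (X₂.d j i ≫ φ)
    rw [← Category.assoc, ← Category.assoc, f.comm]

end Yoneda

section Yoneda2
variable {C : Type u} [Category.{v} C] [Abelian C] (A : Type) [CommRing A] [Linear A C] (Y : C)

lemma yonedaMap_comp {X₁ X₂ X₃ : ChainComplex C ℕ} (f : X₁ ⟶ X₂) (g : X₂ ⟶ X₃) :
    yonedaMap A Y (f ≫ g) = yonedaMap A Y g ≫ yonedaMap A Y f := by
  ext i (φ : X₃.X i ⟶ Y)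
  change (f.f i ≫ g.f i) ≫ φ = f.f i ≫ (g.f i ≫ φ)
  rw [Category.assoc]

lemma yonedaMap_smul_id (a : A) (X₁ : ChainComplex C ℕ) :
    yonedaMap A Y (a • 𝟙 X₁) = a • 𝟙 (X₁.linearYonedaObj A Y) := by
  ext i (φ : X₁.X i ⟶ Y)
  change ((a • 𝟙 X₁).f i) ≫ φ = a • φ
  simp

/-- auxiliary -/
noncomputable def yonedaHomotopyHom {X₁ X₂ : ChainComplex C ℕ} {f g : X₁ ⟶ X₂}
    (ho : Homotopy f g) (i j : ℕ) :
    (X₂.linearYonedaObj A Y).X i ⟶ (X₁.linearYonedaObj A Y).X j :=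
  ModuleCat.ofHom (Linear.leftComp A Y (ho.hom j i))

/-- `yonedaMap` sends homotopic maps to homotopic maps. -/
noncomputable def yonedaHomotopy {X₁ X₂ : ChainComplex C ℕ} {f g : X₁ ⟶ X₂}
    (ho : Homotopy f g) :
    Homotopy (yonedaMap A Y f) (yonedaMap A Y g) where
  hom := yonedaHomotopyHom A Y ho
  zero i j h := by
    have : ho.hom j i = 0 := ho.zero j i (by simpa [eq_comm] using h)
    ext (φ : X₂.X i ⟶ Y)
    change ho.hom j i ≫ φ = 0
    rw [this, Limits.zero_comp]
  comm i := by
    have hd : (dNext i) (yonedaHomotopyHom A Y ho)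
        = ModuleCat.ofHom (Linear.leftComp A Y (prevD i ho.hom)) := by
      rw [dNext_eq _ (show (ComplexShape.up ℕ).Rel i (i+1) by simp),
        prevD_eq _ (show (ComplexShape.down ℕ).Rel (i+1) i by simp)]
      ext (ψ : X₂.X i ⟶ Y)
      change ho.hom i (i+1) ≫ (X₂.d (i+1) i ≫ ψ) = (ho.hom i (i+1) ≫ X₂.d (i+1) i) ≫ ψ
      rw [Category.assoc]
    have hp : (prevD i) (yonedaHomotopyHom A Y ho)
        = ModuleCat.ofHom (Linear.leftComp A Y (dNext i ho.hom)) := by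
      rcases i with _ | n
      · have h1 : (dNext 0) ho.hom = 0 := by
          rw [show (dNext 0) ho.hom = X₁.d 0 ((ComplexShape.down ℕ).next 0) ≫
            ho.hom ((ComplexShape.down ℕ).next 0) 0 from rfl]
          rw [X₁.shape, Limits.zero_comp]
          simp [ComplexShape.down_Rel]
        have h2 : (prevD 0) (yonedaHomotopyHom A Y ho) = 0 := by
          rw [show (prevD 0) (yonedaHomotopyHom A Y ho)
            = _ ≫ (X₁.linearYonedaObj A Y).d ((ComplexShape.up ℕ).prev 0) 0 from rfl]
          rw [HomologicalComplex.shape, Limits.comp_zero]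
          simp [ComplexShape.up_Rel]
        rw [h1, h2]
        ext (ψ : X₂.X 0 ⟶ Y)
        show (0 : (X₂.linearYonedaObj A Y).X 0 ⟶ (X₁.linearYonedaObj A Y).X 0) ψ
          = (0 : X₁.X 0 ⟶ X₂.X 0) ≫ ψ
        rw [Limits.zero_comp]; rfl
      · rw [prevD_eq _ (show (ComplexShape.up ℕ).Rel n (n+1) by simp),
          dNext_eq _ (show (ComplexShape.down ℕ).Rel (n+1) n by simp)]
        ext (ψ : X₂.X (n+1) ⟶ Y)
        change X₁.d (n+1) n ≫ (ho.hom n (n+1) ≫ ψ) = (X₁.d (n+1) n ≫ ho.hom n (n+1)) ≫ ψ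
        rw [Category.assoc]
    rw [hd, hp]
    have hcomm := ho.comm i
    ext (φ : X₂.X i ⟶ Y)
    change f.f i ≫ φ = _
    rw [hcomm]
    change (dNext i ho.hom + prevD i ho.hom + g.f i) ≫ φ =
      ((prevD i) ho.hom ≫ φ + (dNext i ho.hom) ≫ φ) + g.f i ≫ φ
    rw [Preadditive.add_comp, Preadditive.add_comp, add_comm ((dNext i ho.hom) ≫ φ)]

end Yoneda2

section Main
open HomologicalComplex

lemma homologyMap_smul' {R : Type} [CommRing R]
    {K L : HomologicalComplex (ModuleCat R) (ComplexShape.up ℕ)}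
    (f : K ⟶ L) (a : R) (i : ℕ) : homologyMap (a • f) i = a • homologyMap f i := by
  unfold HomologicalComplex.homologyMap
  have hmap : (shortComplexFunctor (ModuleCat R) (ComplexShape.up ℕ) i).map (a • f)
      = a • (shortComplexFunctor (ModuleCat R) (ComplexShape.up ℕ) i).map f := by
    ext <;> rfl
  rw [hmap]
  exact ShortComplex.homologyMap_smul _ _

lemma isZero_hom_module {R : Type} [CommRing R] {X : ModuleCat R} (h : Limits.IsZero X)
    (Y : ModuleCat R) : Limits.IsZero (ModuleCat.of R (X ⟶ Y)) := by
  rw [Limits.IsZero.iff_id_eq_zero]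
  ext (φ : X ⟶ Y) : 2
  change φ = 0
  rw [← Category.id_comp φ, h.eq_of_src (𝟙 X) 0, Limits.zero_comp]

lemma single₀_map_smul {V : Type u} [Category.{v} V] [Abelian V] {A : Type} [CommRing A]
    [Linear A V] (a : A) {X X' : V} (f : X ⟶ X') :
    (ChainComplex.single₀ V).map (a • f) = a • (ChainComplex.single₀ V).map f := by
  refine HomologicalComplex.hom_ext _ _ (fun i => ?_)
  rcases i with _ | n
  · rw [ChainComplex.single₀_map_f_zero, HomologicalComplex.smul_f_apply,
      ChainComplex.single₀_map_f_zero]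
    rfl
  · exact (HomologicalComplex.isZero_single_obj_X (ComplexShape.down ℕ) 0 X (n+1)
      (by simp)).eq_of_src _ _

lemma ext_smul_eq_zero (A : Type) [CommRing A] {X F Y : ModuleCat A} [Projective F] (a : A)
    (g : X ⟶ F) (ι : F ⟶ X) (hfac : g ≫ ι = a • 𝟙 X) (m : ℕ)
    (x : ((Ext A (ModuleCat A) (m + 1)).obj (Opposite.op X)).obj Y) : a • x = 0 := by
  let P : ProjectiveResolution X := CategoryTheory.projectiveResolution X
  let Q : ProjectiveResolution F := ProjectiveResolution.self F
  let α : P.complex ⟶ Q.complex := ProjectiveResolution.lift g P Q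
  let β : Q.complex ⟶ P.complex := ProjectiveResolution.lift ι Q P
  have h1 : (α ≫ β) ≫ P.π = P.π ≫ (ChainComplex.single₀ (ModuleCat A)).map (a • 𝟙 X) := by
    rw [Category.assoc, ProjectiveResolution.lift_commutes,
      ← Category.assoc, ProjectiveResolution.lift_commutes, Category.assoc,
      ← Functor.map_comp, hfac]
  have h2 : (a • 𝟙 P.complex) ≫ P.π = P.π ≫ (ChainComplex.single₀ (ModuleCat A)).map (a • 𝟙 X) := by
    rw [single₀_map_smul (V := ModuleCat A) (A := A), (ChainComplex.single₀ (ModuleCat A)).map_id, Linear.smul_comp, Linear.comp_smul,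
      Category.id_comp, Category.comp_id]
  have ho : Homotopy (α ≫ β) (a • 𝟙 P.complex) :=
    ProjectiveResolution.liftHomotopy (a • 𝟙 X) _ _ h1 h2
  have hoK : Homotopy (yonedaMap A Y (α ≫ β)) (yonedaMap A Y (a • 𝟙 P.complex)) :=
    yonedaHomotopy A Y ho
  have heq := hoK.homologyMap_eq (m + 1)
  -- left side is zero since it factors through the homology of the Yoneda complex of Q
  have hmidzero : Limits.IsZero ((Q.complex.linearYonedaObj A Y).homology (m + 1)) := by
    rw [← HomologicalComplex.exactAt_iff_isZero_homology]
    rw [HomologicalComplex.exactAt_iff]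
    refine ShortComplex.exact_of_isZero_X₂ _ ?_
    exact isZero_hom_module (HomologicalComplex.isZero_single_obj_X
      (ComplexShape.down ℕ) 0 F (m+1) (by simp)) Y
  have hfactor : homologyMap (yonedaMap A Y (α ≫ β)) (m + 1) = 0 := by
    rw [yonedaMap_comp, HomologicalComplex.homologyMap_comp,
      hmidzero.eq_of_tgt (homologyMap (yonedaMap A Y β) (m + 1)) 0, Limits.zero_comp]
  have hzero : (a • 𝟙 ((P.complex.linearYonedaObj A Y).homology (m + 1)))
      = (0 : (P.complex.linearYonedaObj A Y).homology (m + 1) ⟶ _) := by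
    have h4 : homologyMap (yonedaMap A Y (a • 𝟙 P.complex)) (m + 1) = 0 := by
      rw [← heq, hfactor]
    rw [yonedaMap_smul_id A Y a P.complex, homologyMap_smul', HomologicalComplex.homologyMap_id] at h4
    exact h4
  let e := P.isoExt (R := A) (m + 1) Y
  have : e.hom (a • x) = 0 := by
    rw [map_smul]
    have := congrArg (fun φ => φ (e.hom x)) hzero
    exact this
  calc a • x = e.inv (e.hom (a • x)) := (e.hom_inv_id_apply _).symm
  _ = 0 := by rw [this, map_zero]

end Main

lemma exists_free_factor (A : Type) [CommRing A] [IsDomain A] (M : Type) [AddCommGroup M]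
    [Module A M] [Module.Finite A M] :
    ∃ a : A, a ≠ 0 ∧ ∃ F : Submodule A M, Module.Free A F ∧ ∀ m : M, a • m ∈ F := by
  classical
  obtain ⟨s, hs⟩ : (⊤ : Submodule A M).FG := Module.Finite.fg_top
  set v : {x // x ∈ s} → M := fun x => (x : M) with hv
  obtain ⟨I, hli, hspec⟩ := exists_maximal_linearIndepOn A v
  set F : Submodule A M := Submodule.span A (v '' I) with hF
  have hfree : Module.Free A F := by
    rw [hF, Set.image_eq_range]
    exact Module.Free.of_basis (Module.Basis.span hli)
  set c : {x // x ∈ s} → A := fun x =>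
    if h : x ∈ I then 1 else (hspec x h).choose with hc
  have hcne : ∀ x, c x ≠ 0 := by
    intro x
    by_cases h : x ∈ I
    · simp [hc, h]
    · simpa [hc, h] using (hspec x h).choose_spec.1
  have hcmem : ∀ x, c x • v x ∈ F := by
    intro x
    by_cases h : x ∈ I
    · simp only [hc, h, dif_pos, one_smul]
      exact Submodule.subset_span ⟨x, h, rfl⟩
    · simpa [hc, h] using (hspec x h).choose_spec.2
  refine ⟨∏ x : {x // x ∈ s}, c x, Finset.prod_ne_zero_iff.2 fun x _ => hcne x, F, hfree, ?_⟩
  have key : ∀ x : {x // x ∈ s}, (∏ y : {x // x ∈ s}, c y) • v x ∈ F := by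
    intro x
    rw [← Finset.mul_prod_erase Finset.univ c (Finset.mem_univ x), mul_comm, mul_smul]
    exact Submodule.smul_mem _ _ (hcmem x)
  intro m
  have hm : m ∈ Submodule.span A (s : Set M) := by rw [hs]; trivial
  induction hm using Submodule.span_induction with
  | mem x hx => exact key ⟨x, hx⟩
  | zero => simpa using F.zero_mem
  | add x y _ _ hx hy => rw [smul_add]; exact F.add_mem hx hy
  | smul r x _ hx => rw [smul_comm]; exact F.smul_mem r hx

/-- `Ext^i_A(M, A)` as a module over `A`, defined via the derived functor `Ext` of Mathlib. -/
noncomputable def extModule (A : Type) [CommRing A] (M : Type) [AddCommGroup M] [Module A M]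
    (i : ℕ) : ModuleCat A :=
  ((Ext A (ModuleCat A) i).obj (Opposite.op (ModuleCat.of A M))).obj (ModuleCat.of A A)

/-- For `A = k[x_1, …, x_n]` with `k` a field and `n ≥ 1`, and `M` a finitely generated
`A`-module, the module `Ext^i_A(M, A)` is a torsion module for every `i ≥ 1`:
every element is annihilated by some nonzero element of `A`. -/
theorem ext_isTorsion (k : Type) [Field k] (n : ℕ) (hn : 1 ≤ n)
    (M : Type) [AddCommGroup M] [Module (MvPolynomial (Fin n) k) M]
    [Module.Finite (MvPolynomial (Fin n) k) M]
    (i : ℕ) (hi : 1 ≤ i) :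
    ∀ x : extModule (MvPolynomial (Fin n) k) M i,
      ∃ a : MvPolynomial (Fin n) k, a ≠ 0 ∧ a • x = 0 := by

  intro x
  set A := MvPolynomial (Fin n) k with hA
  obtain ⟨a, ha, F, hfree, hmem⟩ := exists_free_factor A M
  obtain ⟨m, rfl⟩ : ∃ m, i = m + 1 := ⟨i - 1, (Nat.succ_pred_eq_of_pos hi).symm⟩
  let X : ModuleCat A := ModuleCat.of A M
  let Fobj : ModuleCat A := ModuleCat.of A F
  haveI : Projective Fobj := ModuleCat.projective_of_free (Module.Free.chooseBasis A F)
  let gl : M →ₗ[A] F :=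
    { toFun := fun m' => ⟨a • m', hmem m'⟩
      map_add' := fun x y => Subtype.ext (smul_add a x y)
      map_smul' := fun c x => Subtype.ext (smul_comm a c x) }
  let g : X ⟶ Fobj := ModuleCat.ofHom gl
  let ι : Fobj ⟶ X := ModuleCat.ofHom F.subtype
  have hfac : g ≫ ι = a • 𝟙 X := by
    ext m'
    rfl
  exact ⟨a, ha, ext_smul_eq_zero A a g ι hfac m x⟩
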